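/- For any ordered index sequences 1 ≤ i_1 < ⋯ < i_{k−1} ≤ n and 1 ≤ j_1 < ⋯ < j_{k+1} ≤ n and any matrix B ∈ ℝ^{n × k}, the Plücker relation holds: ∑_{ℓ=1}^{k+1} (−1)^ℓ · B_{i_1,…,i_{k−1},j_ℓ} · B_{j_1,…,ĵ_ℓ,…,j_{k+1}} = 0, where B_{a_1,…,a_k} denotes the determinant of the k×k submatrix of B with rows a_1,…,a_k, and ĵ_ℓ means j_ℓ is omitted. -/

import Mathlib

theorem det_row_expand {k : ℕ} (M : Matrix (Fin (k+1)) (Fin (k+1)) ℝ) (r : Fin (k+1)) :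
    M.det = ∑ m, M r m * (M.updateRow r (Pi.single m 1 : Fin (k+1) → ℝ)).det := by
  have h1 : M = M.updateRow r (∑ m, M r m • (Pi.single m 1 : Fin (k+1) → ℝ)) := by
    rw [show (∑ m, M r m • (Pi.single m 1 : Fin (k+1) → ℝ)) = M r by
      funext x; simp [Pi.single_apply, mul_ite]]
    exact (Matrix.updateRow_eq_self M r).symm
  conv_lhs => rw [h1]
  have h2 := (Matrix.detRowAlternating : (Fin (k+1) → ℝ) [⋀^Fin (k+1)]→ₗ[ℝ] ℝ).map_update_sum
      Finset.univ r (fun m => M r m • (Pi.single m 1 : Fin (k+1) → ℝ)) M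
  have h3 : ∀ m, Matrix.detRowAlternating (Function.update M r (M r m • (Pi.single m 1 : Fin (k+1) → ℝ))) = M r m * (M.updateRow r (Pi.single m 1 : Fin (k+1) → ℝ)).det := fun m => by
    exact (Matrix.detRowAlternating : (Fin (k+1) → ℝ) [⋀^Fin (k+1)]→ₗ[ℝ] ℝ).map_update_smul
      (M : Fin (k+1) → Fin (k+1) → ℝ) r (M r m) (Pi.single m 1 : Fin (k+1) → ℝ)
  exact h2.trans (Finset.sum_congr rfl fun m _ => h3 m)


/-- Plücker relations for the maximal minors of `B ∈ ℝ^{n × (k+1)}`: for ordered row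
sequences `i₁ < ⋯ < i_k` and `j₁ < ⋯ < j_{k+2}`,
`∑_ℓ (-1)^ℓ B_{i₁,…,i_k,j_ℓ} · B_{j₁,…,ĵ_ℓ,…,j_{k+2}} = 0`, where `B_{a₁,…}` denotes
the determinant of the square submatrix of `B` with the indicated rows. -/
theorem stmt5 (n k : ℕ) (B : Matrix (Fin n) (Fin (k + 1)) ℝ)
    (i : Fin k → Fin n) (j : Fin (k + 2) → Fin n)
    (hi : StrictMono i) (hj : StrictMono j) :
    ∑ l : Fin (k + 2), (-1 : ℝ) ^ (l : ℕ) *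
        (B.submatrix (Fin.snoc i (j l) : Fin (k + 1) → Fin n) id).det *
        (B.submatrix (j ∘ l.succAbove) id).det = 0 := by
  set N : Fin (k+2) → Matrix (Fin (k+1)) (Fin (k+1)) ℝ :=
    fun l => B.submatrix (Fin.snoc i (j l) : Fin (k + 1) → Fin n) id with hN
  set D : Fin (k+2) → ℝ := fun l => (B.submatrix (j ∘ l.succAbove) id).det with hD
  set C : Fin (k+1) → Matrix (Fin (k+1)) (Fin (k+1)) ℝ :=
    fun m => Matrix.of (Fin.snoc (fun a b => B (i a) b) (Pi.single m 1 : Fin (k+1) → ℝ)) with hC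
  have hNdet : ∀ l, (N l).det = ∑ m, B (j l) m * (C m).det := by
    intro l
    rw [det_row_expand (N l) (Fin.last k)]
    refine Finset.sum_congr rfl fun m _ => ?_
    have h1 : N l (Fin.last k) m = B (j l) m := by simp [hN]
    have h2 : (N l).updateRow (Fin.last k) (Pi.single m 1 : Fin (k+1) → ℝ) = C m := by
      funext a b
      refine Fin.lastCases ?_ (fun a => ?_) a
      · simp [hC]
      · simp [hN, hC, Matrix.updateRow_apply, (Fin.castSucc_lt_last a).ne]
    rw [h1, h2]
  set H : Fin (k+1) → Matrix (Fin (k+2)) (Fin (k+2)) ℝ :=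
    fun m => Matrix.of (fun l => Fin.cons (B (j l) m) (fun m' => B (j l) m')) with hH
  have hHdet : ∀ m, (H m).det = ∑ l : Fin (k+2), (-1:ℝ)^(l:ℕ) * B (j l) m * D l := by
    intro m
    rw [Matrix.det_succ_column_zero]
    refine Finset.sum_congr rfl fun l _ => ?_
    have e1 : H m l 0 = B (j l) m := by simp [hH]
    have e2 : (H m).submatrix l.succAbove Fin.succ = B.submatrix (j ∘ l.succAbove) id := by
      funext a b; simp [hH]
    rw [e1, e2]
  have hH0 : ∀ m, (H m).det = 0 := fun m =>
    Matrix.det_zero_of_column_eq (Fin.succ_ne_zero m).symm (fun l => by simp [hH])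
  calc ∑ l : Fin (k + 2), (-1 : ℝ) ^ (l : ℕ) * (N l).det * D l
      = ∑ l : Fin (k+2), ∑ m : Fin (k+1),
          (C m).det * ((-1:ℝ)^(l:ℕ) * B (j l) m * D l) := by
        refine Finset.sum_congr rfl fun l _ => ?_
        rw [hNdet l, Finset.mul_sum, Finset.sum_mul]
        exact Finset.sum_congr rfl fun m _ => by ring
    _ = ∑ m : Fin (k+1), (C m).det * ∑ l : Fin (k+2), (-1:ℝ)^(l:ℕ) * B (j l) m * D l := by
        rw [Finset.sum_comm]
        exact Finset.sum_congr rfl fun m _ => (Finset.mul_sum _ _ _).symm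
    _ = 0 := by
        refine Finset.sum_eq_zero fun m _ => ?_
        rw [← hHdet m, hH0 m, mul_zero]
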